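/- Let F be a finite field, X a finite-dimensional F-vector space, and f, g : X → F^Ω F-linear maps that are locally ω-equivalent (wt(f(θ)) = wt(g(θ)) for all θ ∈ X). Suppose (χ(f[X]), χ(g[X]), ω) satisfies the unique decomposition property: for all I ⊆ χ(f[X]) and J ⊆ χ(g[X]) with Σ_{i∈I} ω(i) = Σ_{j∈J} ω(j), the multisets {ω(i) : i ∈ I} and {ω(j) : j ∈ J} coincide. Then there exists an ω-weight isometry φ of F^Ω (an F-linear automorphism with wt(φ(α)) = wt(α) for all α) such that g = φ ∘ f. -/

import Mathlib

open scoped Classical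
open Finset

/-- ω-weight of a vector β ∈ F^Ω. -/
noncomputable def wwt {F Ω : Type*} [Field F] [Fintype Ω] (ω : Ω → ℝ) (β : Ω → F) : ℝ :=
  ∑ i ∈ univ.filter (fun i => β i ≠ 0), ω i

/-- ω-weight of a set A ⊆ F^Ω. -/
noncomputable def WWt {F Ω : Type*} [Field F] [Fintype Ω] (ω : Ω → ℝ) (A : Set (Ω → F)) : ℝ :=
  ∑ i ∈ univ.filter (fun i => ∃ β ∈ A, β i ≠ 0), ω i

section Aux

set_option linter.unusedSectionVars false

variable {F : Type*} [Field F] [Fintype F]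
variable {X : Type*} [AddCommGroup X] [Module F X]

lemma aux_surj {μ : X →ₗ[F] F} (hμ : μ ≠ 0) : Function.Surjective μ := by
  obtain ⟨θ₀, hθ₀⟩ : ∃ θ, μ θ ≠ 0 := by
    by_contra h; push_neg at h; exact hμ (LinearMap.ext fun θ => h θ)
  intro a
  refine ⟨(a / μ θ₀) • θ₀, ?_⟩
  rw [map_smul, smul_eq_mul]
  field_simp

lemma aux_card_ker [Fintype X] {μ : X →ₗ[F] F} (hμ : μ ≠ 0) :
    Fintype.card F * Nat.card (LinearMap.ker μ) = Fintype.card X := by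
  have hsurj := aux_surj hμ
  have h1 : Nat.card X = Nat.card (X ⧸ LinearMap.ker μ) * Nat.card (LinearMap.ker μ) :=
    AddSubgroup.card_eq_card_quotient_mul_card_addSubgroup (LinearMap.ker μ).toAddSubgroup
  have h2 : (X ⧸ LinearMap.ker μ) ≃ F :=
    ((LinearMap.quotKerEquivRange μ).trans
      (LinearEquiv.ofTop _ (LinearMap.range_eq_top.2 hsurj))).toEquiv
  have h3 : Nat.card (X ⧸ LinearMap.ker μ) = Fintype.card F := by
    rw [Nat.card_congr h2, Nat.card_eq_fintype_card]
  rw [← Nat.card_eq_fintype_card (α := X), h1, h3]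

lemma aux_card_nonzero_zero [Fintype X] {μ : X →ₗ[F] F} (hμ : μ = 0) :
    (univ.filter fun θ : X => μ θ ≠ 0).card = 0 := by
  simp [hμ]

lemma aux_card_nonzero [Fintype X] {μ : X →ₗ[F] F} (hμ : μ ≠ 0) :
    ((univ.filter fun θ : X => μ θ ≠ 0).card : ℝ) * (Fintype.card F) =
      (Fintype.card X : ℝ) * ((Fintype.card F : ℝ) - 1) := by
  have hker : (univ.filter fun θ : X => ¬ μ θ ≠ 0).card = Nat.card (LinearMap.ker μ) := by
    rw [Nat.card_eq_fintype_card, Fintype.card_subtype]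
    congr 1
    apply Finset.filter_congr
    intro x _
    simp [LinearMap.mem_ker]
  have hsplit := Finset.card_filter_add_card_filter_not
    (s := (univ : Finset X)) (p := fun θ => μ θ ≠ 0)
  have hcard := aux_card_ker hμ
  have h1 : ((univ.filter fun θ : X => μ θ ≠ 0).card : ℝ)
      = (Fintype.card X : ℝ) - (Nat.card (LinearMap.ker μ) : ℝ) := by
    have h : (univ.filter fun θ : X => μ θ ≠ 0).card + Nat.card (LinearMap.ker μ)
        = Fintype.card X := by
      rw [← hker]
      simpa using hsplit
    have := congrArg (fun n : ℕ => (n : ℝ)) h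
    push_cast at this
    linarith
  have h2 : (Fintype.card F : ℝ) * (Nat.card (LinearMap.ker μ) : ℝ) = Fintype.card X := by
    exact_mod_cast congrArg (fun n : ℕ => (n : ℝ)) hcard
  rw [h1]
  nlinarith [h2]

lemma aux_finrank_ker [FiniteDimensional F X] {μ : X →ₗ[F] F} (hμ : μ ≠ 0) :
    Module.finrank F (LinearMap.ker μ) + 1 = Module.finrank F X := by
  have h := LinearMap.finrank_range_add_finrank_ker μ
  have hr : LinearMap.range μ = ⊤ := LinearMap.range_eq_top.2 (aux_surj hμ)
  rw [hr, finrank_top, Module.finrank_self] at h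
  omega

lemma aux_restrict_ne_zero [FiniteDimensional F X] {W : Submodule F X}
    (hW : Module.finrank F W + 1 = Module.finrank F X) (μ : X →ₗ[F] F) :
    μ.comp W.subtype ≠ 0 ↔ (μ ≠ 0 ∧ LinearMap.ker μ ≠ W) := by
  constructor
  · intro h
    constructor
    · rintro rfl; exact h (by ext w; simp)
    · intro hk
      refine h ?_
      ext w
      have hw : (w : X) ∈ LinearMap.ker μ := by rw [hk]; exact w.2
      simpa using hw
  · rintro ⟨hμ, hk⟩ h
    refine hk ?_
    have hle : W ≤ LinearMap.ker μ := by
      intro x hx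
      have := LinearMap.ext_iff.1 h ⟨x, hx⟩
      simpa using this
    have hfr : Module.finrank F W = Module.finrank F (LinearMap.ker μ) := by
      have := aux_finrank_ker hμ
      omega
    exact (Submodule.eq_of_le_of_finrank_eq hle hfr).symm

lemma aux_smul_of_ker_eq {μ ν : X →ₗ[F] F} (hμ : μ ≠ 0)
    (hker : LinearMap.ker μ = LinearMap.ker ν) :
    ∃ c : F, c ≠ 0 ∧ ∀ θ, ν θ = c * μ θ := by
  obtain ⟨θ₀, hθ₀⟩ : ∃ θ, μ θ ≠ 0 := by
    by_contra h; push_neg at h; exact hμ (LinearMap.ext fun θ => h θ)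
  have hν0 : ν θ₀ ≠ 0 := by
    intro h
    apply hθ₀
    have : θ₀ ∈ LinearMap.ker ν := h
    rw [← hker] at this
    exact this
  refine ⟨ν θ₀ / μ θ₀, div_ne_zero hν0 hθ₀, fun θ => ?_⟩
  have hm : θ - (μ θ / μ θ₀) • θ₀ ∈ LinearMap.ker μ := by
    rw [LinearMap.mem_ker, map_sub, map_smul, smul_eq_mul]
    field_simp
    simp
  rw [hker, LinearMap.mem_ker, map_sub, map_smul, smul_eq_mul, sub_eq_zero] at hm
  rw [hm]
  field_simp

lemma aux_sum_swap {Ω : Type*} [Fintype Ω] (ω : Ω → ℝ) {Y : Type*} [Fintype Y]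
    (h : Y → Ω → F) :
    ∑ y : Y, wwt ω (h y)
      = ∑ i : Ω, ω i * ((univ.filter fun y => h y i ≠ 0).card : ℝ) := by
  unfold wwt
  simp only [Finset.sum_filter]
  rw [Finset.sum_comm]
  apply Finset.sum_congr rfl
  intro i _
  rw [← Finset.sum_filter, Finset.sum_const, nsmul_eq_mul, mul_comm]

lemma aux_step {Ω : Type*} [Fintype Ω] (ω : Ω → ℝ) {Y : Type*} [AddCommGroup Y]
    [Module F Y] [Fintype Y] (μ : Ω → Y →ₗ[F] F) :
    (∑ y : Y, wwt ω (fun i => μ i y)) * (Fintype.card F : ℝ)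
      = ((Fintype.card Y : ℝ) * ((Fintype.card F : ℝ) - 1))
          * ∑ i ∈ univ.filter (fun i => μ i ≠ 0), ω i := by
  rw [aux_sum_swap ω (fun y i => μ i y), Finset.sum_mul, Finset.mul_sum,
    Finset.sum_filter]
  apply Finset.sum_congr rfl
  intro i _
  by_cases hi : μ i = 0
  · rw [if_neg (by simpa using hi)]
    have : (univ.filter fun y : Y => μ i y ≠ 0).card = 0 := aux_card_nonzero_zero hi
    rw [this]
    simp
  · rw [if_pos hi, mul_assoc, aux_card_nonzero hi]
    ring

end Aux

theorem stmt6 {F Ω : Type*} [Field F] [Fintype F] [Fintype Ω] [Nonempty Ω]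
    {X : Type*} [AddCommGroup X] [Module F X] [FiniteDimensional F X]
    (ω : Ω → ℝ) (hω : ∀ i, 0 < ω i)
    (f g : X →ₗ[F] (Ω → F))
    (hloc : ∀ θ : X, wwt ω (f θ) = wwt ω (g θ))
    (hUDP : ∀ I J : Finset Ω,
      (∀ i ∈ I, ∃ θ : X, f θ i ≠ 0) → (∀ j ∈ J, ∃ θ : X, g θ j ≠ 0) →
      (∑ i ∈ I, ω i) = (∑ j ∈ J, ω j) →
      ∀ b : ℝ, (I.filter (fun i => ω i = b)).card = (J.filter (fun j => ω j = b)).card) :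
    ∃ φ : (Ω → F) ≃ₗ[F] (Ω → F),
      (∀ α : Ω → F, wwt ω (φ α) = wwt ω α) ∧ ∀ x : X, φ (f x) = g x := by
  haveI : Finite X := Module.finite_of_finite F
  haveI : Fintype X := Fintype.ofFinite X
  set fd : Ω → (X →ₗ[F] F) := fun i => (LinearMap.proj i).comp f with hfd
  set gd : Ω → (X →ₗ[F] F) := fun j => (LinearMap.proj j).comp g with hgd
  have hfde : ∀ θ i, f θ i = fd i θ := fun _ _ => rfl
  have hgde : ∀ θ j, g θ j = gd j θ := fun _ _ => rfl
  set H : Finset Ω := univ.filter (fun i => fd i ≠ 0) with hH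
  set K : Finset Ω := univ.filter (fun j => gd j ≠ 0) with hK
  have hq1 : (1 : ℝ) < (Fintype.card F : ℝ) := by exact_mod_cast Fintype.one_lt_card
  -- Step 1 : the total weights agree
  have hsum_eq : ∑ i ∈ H, ω i = ∑ j ∈ K, ω j := by
    have hf := aux_step ω fd
    have hg := aux_step ω gd
    have hl : ∑ θ : X, wwt ω (fun i => fd i θ) = ∑ θ : X, wwt ω (fun j => gd j θ) :=
      Finset.sum_congr rfl fun θ _ => hloc θ
    rw [hl, hg] at hf
    have hXpos : (0 : ℝ) < (Fintype.card X : ℝ) := by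
      exact_mod_cast Fintype.card_pos
    have hc : ((Fintype.card X : ℝ) * ((Fintype.card F : ℝ) - 1)) ≠ 0 :=
      ne_of_gt (mul_pos hXpos (by linarith))
    exact (mul_left_cancel₀ hc hf.symm)
  -- Step 2 : for every hyperplane, the weights of the kernel fibers agree
  have hW_eq : ∀ W : Submodule F X, Module.finrank F W + 1 = Module.finrank F X →
      ∑ i ∈ H.filter (fun i => LinearMap.ker (fd i) = W), ω i
        = ∑ j ∈ K.filter (fun j => LinearMap.ker (gd j) = W), ω j := by
    intro W hW
    haveI : Fintype ↥W := Fintype.ofFinite _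
    have hf := aux_step ω (fun i => (fd i).comp W.subtype)
    have hg := aux_step ω (fun j => (gd j).comp W.subtype)
    have hl : ∑ y : ↥W, wwt ω (fun i => ((fd i).comp W.subtype) y)
        = ∑ y : ↥W, wwt ω (fun j => ((gd j).comp W.subtype) y) :=
      Finset.sum_congr rfl fun y _ => hloc (y : X)
    rw [hl, hg] at hf
    have hWpos : (0 : ℝ) < (Fintype.card ↥W : ℝ) := by exact_mod_cast Fintype.card_pos
    have hc : ((Fintype.card ↥W : ℝ) * ((Fintype.card F : ℝ) - 1)) ≠ 0 :=
      ne_of_gt (mul_pos hWpos (by linarith))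
    have hf2 := mul_left_cancel₀ hc hf.symm
    have hfil : ∀ d : Ω → (X →ₗ[F] F),
        univ.filter (fun i => d i ≠ 0 ∧ LinearMap.ker (d i) ≠ W)
          = (univ.filter (fun i => d i ≠ 0)).filter (fun i => LinearMap.ker (d i) ≠ W) := by
      intro d
      rw [Finset.filter_filter]
    have hfilf : univ.filter (fun i => (fd i).comp W.subtype ≠ 0)
        = H.filter (fun i => LinearMap.ker (fd i) ≠ W) := by
      rw [hH, ← hfil]
      apply Finset.filter_congr
      intro i _
      exact aux_restrict_ne_zero hW (fd i)
    have hfilg : univ.filter (fun j => (gd j).comp W.subtype ≠ 0)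
        = K.filter (fun j => LinearMap.ker (gd j) ≠ W) := by
      rw [hK, ← hfil]
      apply Finset.filter_congr
      intro j _
      exact aux_restrict_ne_zero hW (gd j)
    rw [hfilf, hfilg] at hf2
    have hsf := Finset.sum_filter_add_sum_filter_not H
      (fun i => LinearMap.ker (fd i) = W) ω
    have hsg := Finset.sum_filter_add_sum_filter_not K
      (fun j => LinearMap.ker (gd j) = W) ω
    have hne : ∀ (s : Finset Ω) (d : Ω → (X →ₗ[F] F)),
        s.filter (fun i => ¬ LinearMap.ker (d i) = W)
          = s.filter (fun i => LinearMap.ker (d i) ≠ W) := fun _ _ => rfl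
    rw [hne H fd] at hsf
    rw [hne K gd] at hsg
    linarith [hsum_eq]
  -- membership helpers for hUDP
  have hmemH : ∀ s : Finset Ω, (∀ i ∈ s, i ∈ H) → ∀ i ∈ s, ∃ θ : X, f θ i ≠ 0 := by
    intro s hs i hi
    have := hs i hi
    rw [hH, Finset.mem_filter] at this
    by_contra hco
    push_neg at hco
    exact this.2 (LinearMap.ext fun θ => hco θ)
  have hmemK : ∀ s : Finset Ω, (∀ j ∈ s, j ∈ K) → ∀ j ∈ s, ∃ θ : X, g θ j ≠ 0 := by
    intro s hs j hj
    have := hs j hj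
    rw [hK, Finset.mem_filter] at this
    by_contra hco
    push_neg at hco
    exact this.2 (LinearMap.ext fun θ => hco θ)
  -- level-set cardinalities agree on H and K
  have hcardHK : ∀ b : ℝ,
      (H.filter (fun i => ω i = b)).card = (K.filter (fun j => ω j = b)).card :=
    hUDP H K (hmemH H (fun _ h => h)) (hmemK K (fun _ h => h)) hsum_eq
  -- level-set cardinalities agree on kernel fibers
  have hcardW : ∀ (W : Submodule F X), Module.finrank F W + 1 = Module.finrank F X →
      ∀ b : ℝ,
      ((H.filter (fun i => LinearMap.ker (fd i) = W)).filter (fun i => ω i = b)).card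
        = ((K.filter (fun j => LinearMap.ker (gd j) = W)).filter (fun j => ω j = b)).card := by
    intro W hW
    refine hUDP _ _ (hmemH _ ?_) (hmemK _ ?_) (hW_eq W hW)
    · intro i hi; exact (Finset.mem_filter.1 hi).1
    · intro j hj; exact (Finset.mem_filter.1 hj).1
  -- the coloring maps
  set cf : Ω → Option (Submodule F X) × ℝ := fun i =>
    (if fd i = 0 then none else some (LinearMap.ker (fd i)), ω i) with hcf
  set cg : Ω → Option (Submodule F X) × ℝ := fun j =>
    (if gd j = 0 then none else some (LinearMap.ker (gd j)), ω j) with hcg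
  have hfiber : ∀ v : Option (Submodule F X) × ℝ,
      (univ.filter fun j => cg j = v).card = (univ.filter fun i => cf i = v).card := by
    rintro ⟨o, b⟩
    match o with
    | none =>
      have hsplit : ∀ (d : Ω → (X →ₗ[F] F)) (c : Ω → Option (Submodule F X) × ℝ),
          (∀ i, c i = (if d i = 0 then none else some (LinearMap.ker (d i)), ω i)) →
          (univ.filter fun i => c i = (none, b)).card
            + ((univ.filter (fun i => d i ≠ 0)).filter (fun i => ω i = b)).card
            = (univ.filter fun i => ω i = b).card := by
        intro d c hc
        have h1 : (univ.filter fun i => c i = (none, b))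
            = (univ.filter (fun i => ω i = b)).filter (fun i => d i = 0) := by
          ext i
          simp only [Finset.mem_filter, Finset.mem_univ, true_and, hc i, Prod.mk.injEq]
          by_cases hd : d i = 0
          · simp [hd, Prod.ext_iff]
          · simp [hd, Prod.ext_iff]
        have h2 : (univ.filter (fun i => d i ≠ 0)).filter (fun i => ω i = b)
            = (univ.filter (fun i => ω i = b)).filter (fun i => ¬ d i = 0) :=
          Finset.filter_comm _ _ _
        rw [h1, h2]
        exact Finset.card_filter_add_card_filter_not (fun i => d i = 0)
      have hf := hsplit fd cf (fun i => rfl)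
      have hg := hsplit gd cg (fun j => rfl)
      have := hcardHK b
      rw [hH] at this
      rw [hK] at this
      omega
    | some W =>
      by_cases hW : Module.finrank F W + 1 = Module.finrank F X
      · have hsome : ∀ (d : Ω → (X →ₗ[F] F)) (c : Ω → Option (Submodule F X) × ℝ),
            (∀ i, c i = (if d i = 0 then none else some (LinearMap.ker (d i)), ω i)) →
            (univ.filter fun i => c i = (some W, b))
              = ((univ.filter (fun i => d i ≠ 0)).filter
                  (fun i => LinearMap.ker (d i) = W)).filter (fun i => ω i = b) := by
          intro d c hc
          ext i
          simp only [Finset.mem_filter, Finset.mem_univ, true_and, hc i, Prod.mk.injEq]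
          by_cases hd : d i = 0
          · simp [hd, Prod.ext_iff]
          · simp [hd, Prod.ext_iff]
        rw [hsome fd cf (fun i => rfl), hsome gd cg (fun j => rfl)]
        exact (hcardW W hW b).symm
      · have hempty : ∀ (d : Ω → (X →ₗ[F] F)) (c : Ω → Option (Submodule F X) × ℝ),
            (∀ i, c i = (if d i = 0 then none else some (LinearMap.ker (d i)), ω i)) →
            (univ.filter fun i => c i = (some W, b)) = ∅ := by
          intro d c hc
          apply Finset.filter_false_of_mem
          intro i _
          rw [hc i]
          intro hcon
          rw [Prod.mk.injEq] at hcon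
          by_cases hd : d i = 0
          · rw [if_pos hd] at hcon; exact absurd hcon.1 (by simp)
          · rw [if_neg hd] at hcon
            have hkW : LinearMap.ker (d i) = W := Option.some.inj hcon.1
            exact hW (hkW ▸ aux_finrank_ker hd)
        rw [hempty fd cf (fun i => rfl), hempty gd cg (fun j => rfl)]
  -- build the permutation
  have hfibcard : ∀ v : Option (Submodule F X) × ℝ, Fintype.card {j // cg j = v} = Fintype.card {i // cf i = v} := by
    intro v
    rw [Fintype.card_subtype, Fintype.card_subtype]
    exact hfiber v
  let e : ∀ v : Option (Submodule F X) × ℝ, {j // cg j = v} ≃ {i // cf i = v} :=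
    fun v => Fintype.equivOfCardEq (hfibcard v)
  let π : Ω ≃ Ω := Equiv.ofFiberEquiv e
  have hπ : ∀ j, cf (π j) = cg j := fun j => Equiv.ofFiberEquiv_map e j
  have hπω : ∀ j, ω (π j) = ω j := fun j => congrArg Prod.snd (hπ j)
  have hπker : ∀ j, (if fd (π j) = 0 then none else some (LinearMap.ker (fd (π j))))
      = (if gd j = 0 then none else some (LinearMap.ker (gd j))) :=
    fun j => congrArg Prod.fst (hπ j)
  -- the scalars
  have hsc : ∀ j, ∃ c : F, c ≠ 0 ∧ ∀ θ, gd j θ = c * fd (π j) θ := by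
    intro j
    by_cases hj : gd j = 0
    · refine ⟨1, one_ne_zero, fun θ => ?_⟩
      have hf0 : fd (π j) = 0 := by
        by_contra h
        have := hπker j
        rw [if_pos hj, if_neg h] at this
        exact absurd this (by simp)
      rw [hj, hf0]
      simp
    · have hf : fd (π j) ≠ 0 := by
        intro h
        have := hπker j
        rw [if_pos h, if_neg hj] at this
        exact absurd this (by simp)
      have hker : LinearMap.ker (fd (π j)) = LinearMap.ker (gd j) := by
        have := hπker j
        rw [if_neg hf, if_neg hj] at this
        exact Option.some.inj this
      exact aux_smul_of_ker_eq hf hker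
  choose c hc0 hc using hsc
  -- the isometry
  refine ⟨(LinearEquiv.funCongrLeft F F π).trans
      (LinearEquiv.piCongrRight fun j => LinearEquiv.smulOfNeZero F F (c j) (hc0 j)),
    ?_, ?_⟩
  · intro α
    have hφ : ∀ j, ((LinearEquiv.funCongrLeft F F π).trans
        (LinearEquiv.piCongrRight fun j => LinearEquiv.smulOfNeZero F F (c j) (hc0 j))) α j
          = c j * α (π j) := fun j => rfl
    unfold wwt
    have hfil : univ.filter (fun j => ((LinearEquiv.funCongrLeft F F π).trans
        (LinearEquiv.piCongrRight fun j => LinearEquiv.smulOfNeZero F F (c j) (hc0 j))) α j ≠ 0)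
          = univ.filter (fun j => α (π j) ≠ 0) := by
      apply Finset.filter_congr
      intro j _
      rw [hφ j]
      simp [hc0 j]
    rw [hfil]
    have h1 : ∑ j ∈ univ.filter (fun j => α (π j) ≠ 0), ω j
        = ∑ j ∈ univ.filter (fun j => α (π j) ≠ 0), ω (π j) :=
      Finset.sum_congr rfl fun j _ => (hπω j).symm
    rw [h1]
    apply Finset.sum_nbij' (i := fun j => π j) (j := fun i => π.symm i)
    · intro a ha
      simp only [Finset.mem_filter, Finset.mem_univ, true_and] at ha ⊢
      exact ha
    · intro a ha
      simp only [Finset.mem_filter, Finset.mem_univ, true_and] at ha ⊢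
      simpa using ha
    · intro a _; simp
    · intro a _; simp
    · intro a _; rfl
  · intro x
    funext j
    have : ((LinearEquiv.funCongrLeft F F π).trans
        (LinearEquiv.piCongrRight fun j => LinearEquiv.smulOfNeZero F F (c j) (hc0 j)))
          (f x) j = c j * f x (π j) := rfl
    rw [this, hfde x (π j), ← hc j x, ← hgde x j]
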